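/- Let d be even, 0 < i₀ < d-1, and suppose |α⟩ = Σ_{j=0}^{d-1} α_j|j⟩ is a unit vector in ℂ^d with ⟨α| X^{d/2} Z^i |α⟩ = 0 for i = 0,...,d/2 and ⟨α| Z^{i₀+2k} |α⟩ = 0 for k = 0,...,d/2 - 1. Then no such |α⟩ exists; i.e., these conditions are contradictory. -/

import Mathlib

open Matrix
open scoped Fin.NatCast Fin.CommRing

/-- The primitive `d`-th root of unity `ω = e^{2πi/d}`. -/
noncomputable def omega (d : ℕ) : ℂ := Complex.exp (2 * Real.pi * Complex.I / d)

/-- The generalized Pauli shift matrix `X` on `ℂ^d`: `X|j⟩ = |j+1 mod d⟩`. -/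
def Xmat (d : ℕ) : Matrix (Fin d) (Fin d) ℂ :=
  Matrix.of fun i j => if (i : ℕ) = ((j : ℕ) + 1) % d then 1 else 0

/-- The generalized Pauli clock matrix `Z` on `ℂ^d`: `Z|j⟩ = ω^j|j⟩`. -/
noncomputable def Zmat (d : ℕ) : Matrix (Fin d) (Fin d) ℂ :=
  Matrix.diagonal fun j => omega d ^ (j : ℕ)

lemma geomz {n : ℕ} (z : ℂ) (hz : z ^ n = 1) (h1 : z ≠ 1) :
    ∑ k ∈ Finset.range n, z ^ k = 0 := by
  rw [geom_sum_eq h1, hz, sub_self, zero_div]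

lemma orth_sum {n : ℕ} (ζ : ℂ) (hζ : IsPrimitiveRoot ζ n) (t : ℕ) :
    ∑ k ∈ Finset.range n, ζ ^ (t * k) = if n ∣ t then (n : ℂ) else 0 := by
  have hrw : ∀ k, ζ ^ (t * k) = (ζ ^ t) ^ k := fun k => pow_mul ζ t k
  simp only [hrw]
  split_ifs with h
  · have h1 : ζ ^ t = 1 := (hζ.pow_eq_one_iff_dvd t).mpr h
    simp [h1]
  · exact geomz _ (by rw [← pow_mul, mul_comm, pow_mul, hζ.pow_eq_one, one_pow])
      (fun hc => h ((hζ.pow_eq_one_iff_dvd t).mp hc))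

lemma dft_extract (d : ℕ) (hd : 0 < d) (ω : ℂ) (hprim : IsPrimitiveRoot ω d)
    (c : Fin d → ℂ) (hg : ∀ j, j < d → ∑ b : Fin d, c b * ω ^ ((b : ℕ) * j) = 0)
    (a : Fin d) : c a = 0 := by
  set t := d - (a : ℕ) with ht
  have key : ∑ j ∈ Finset.range d, (∑ b : Fin d, c b * ω ^ ((b : ℕ) * j)) * ω ^ (t * j) = 0 := by
    apply Finset.sum_eq_zero
    intro j hj
    rw [hg j (Finset.mem_range.mp hj), zero_mul]
  have e1 : ∀ j ∈ Finset.range d, (∑ b : Fin d, c b * ω ^ ((b : ℕ) * j)) * ω ^ (t * j)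
      = ∑ b : Fin d, c b * ω ^ (((b : ℕ) + t) * j) := by
    intro j _
    rw [Finset.sum_mul]
    refine Finset.sum_congr rfl fun b _ => ?_
    rw [mul_assoc, ← pow_add, ← add_mul]
  rw [Finset.sum_congr rfl e1, Finset.sum_comm] at key
  have e2 : ∀ b : Fin d, ∑ j ∈ Finset.range d, c b * ω ^ (((b : ℕ) + t) * j)
      = c b * (if d ∣ ((b : ℕ) + t) then (d : ℂ) else 0) := by
    intro b
    rw [← Finset.mul_sum, orth_sum ω hprim]
  rw [Finset.sum_congr rfl (fun b _ => e2 b)] at key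
  have e3 : ∑ b : Fin d, c b * (if d ∣ ((b : ℕ) + t) then (d : ℂ) else 0) = c a * d := by
    rw [Finset.sum_eq_single a]
    · have hsum : (a : ℕ) + t = d := by have := a.isLt; omega
      rw [hsum, if_pos dvd_rfl]
    · intro b _ hba
      rw [if_neg, mul_zero]
      intro hdvd
      obtain ⟨k, hk⟩ := hdvd
      have hb := b.isLt
      have ha := a.isLt
      match k with
      | 0 => omega
      | 1 => exact hba (Fin.ext (by omega))
      | (k+2) =>
        have h2 : d * 2 ≤ d * (k + 2) := Nat.mul_le_mul_left d (by omega)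
        omega
    · intro h; exact absurd (Finset.mem_univ a) h
  rw [e3] at key
  rcases mul_eq_zero.mp key with h | h
  · exact h
  · exact absurd h (Nat.cast_ne_zero.mpr (by omega))

lemma sym_extend (d m : ℕ) [NeZero d] (hd : d = m + m) (hm : 0 < m) (ω : ℂ)
    (hprim : IsPrimitiveRoot ω d) (hconj : (starRingEnd ℂ) ω * ω = 1)
    (c : Fin d → ℂ)
    (hcc : ∀ b : Fin d, (starRingEnd ℂ) (c b) = c (b + (m : Fin d)))
    (h0 : ∀ i : ℕ, i ≤ m → ∑ b : Fin d, c b * ω ^ ((b : ℕ) * i) = 0) :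
    ∀ j : ℕ, j < d → ∑ b : Fin d, c b * ω ^ ((b : ℕ) * j) = 0 := by
  have hd0 : 0 < d := by omega
  have hω1 : ω ^ d = 1 := hprim.pow_eq_one
  have hmodp : ∀ x : ℕ, ω ^ x = ω ^ (x % d) := by
    intro x
    conv_lhs => rw [← Nat.div_add_mod x d]
    rw [pow_add, pow_mul, hω1, one_pow, one_mul]
  have hcong : ∀ x y : ℕ, x % d = y % d → ω ^ x = ω ^ y := by
    intro x y h
    rw [hmodp x, hmodp y, h]
  have hneg : ω ^ m = -1 := by
    have hsq : (ω ^ m - 1) * (ω ^ m + 1) = 0 := by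
      have h2 : ω ^ m * ω ^ m = 1 := by rw [← pow_add, show m + m = d by omega, hω1]
      linear_combination h2
    rcases mul_eq_zero.mp hsq with h | h
    · exfalso
      have hdvd : d ∣ m := hprim.dvd_of_pow_eq_one m (by linear_combination h)
      have := Nat.le_of_dvd hm hdvd
      omega
    · linear_combination h
  have hconjpow : ∀ x : ℕ, (starRingEnd ℂ) (ω ^ x) = ω ^ (x * (d - 1)) := by
    intro x
    have hω0 : ω ≠ 0 := by
      intro h; rw [h, mul_zero] at hconj; exact zero_ne_one hconj
    have h1 : (starRingEnd ℂ) (ω ^ x) * ω ^ x = 1 := by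
      rw [map_pow, ← mul_pow, hconj, one_pow]
    have hexp : x * (d - 1) + x = x * d := by
      calc x * (d - 1) + x = x * ((d - 1) + 1) := (Nat.mul_succ x (d - 1)).symm
        _ = x * d := by rw [show d - 1 + 1 = d by omega]
    have h2 : ω ^ (x * (d - 1)) * ω ^ x = 1 := by
      rw [← pow_add, hexp, mul_comm x d, pow_mul, hω1, one_pow]
    exact mul_right_cancel₀ (pow_ne_zero x hω0) (h1.trans h2.symm)
  have hvalm : ((m : Fin d) : ℕ) = m := by
    rw [Fin.val_natCast]
    exact Nat.mod_eq_of_lt (by omega)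
  have hmm0 : ∀ x : Fin d, x + (m : Fin d) + (m : Fin d) = x := by
    intro x
    rw [add_assoc]
    have h3 : ((m : Fin d) + (m : Fin d)) = ((m + m : ℕ) : Fin d) := by push_cast; ring
    rw [h3, show m + m = d from by omega, Fin.natCast_self, add_zero]
  have hshift : ∀ (x : Fin d) (i : ℕ),
      ω ^ ((((x + (m : Fin d)) : Fin d) : ℕ) * i) = ω ^ ((x : ℕ) * i) * (-1 : ℂ) ^ i := by
    intro x i
    have hmv : (((x + (m : Fin d)) : Fin d) : ℕ) = ((x : ℕ) + m) % d := by
      rw [Fin.val_add, hvalm]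
    have h4 : ω ^ ((((x + (m : Fin d)) : Fin d) : ℕ) * i) = ω ^ (((x : ℕ) + m) * i) := by
      apply hcong
      rw [hmv]
      exact Nat.ModEq.mul_right i (Nat.mod_modEq _ d)
    rw [h4, add_mul, pow_add]
    congr 1
    rw [pow_mul, hneg]
  have hrev : ∀ i : ℕ, ∑ b : Fin d, c b * ω ^ ((b : ℕ) * ((d - 1) * i))
      = (-1 : ℂ) ^ i * (starRingEnd ℂ) (∑ b : Fin d, c b * ω ^ ((b : ℕ) * i)) := by
    intro i
    have step1 : ∀ b : Fin d, c b * ω ^ ((b : ℕ) * ((d - 1) * i))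
        = c b * (starRingEnd ℂ) (ω ^ ((b : ℕ) * i)) := by
      intro b
      rw [hconjpow]
      congr 1
      ring
    rw [Finset.sum_congr rfl (fun b _ => step1 b), map_sum, Finset.mul_sum]
    refine Fintype.sum_equiv (Equiv.addRight ((m : ℕ) : Fin d)) _ _ fun x => ?_
    simp only [Equiv.coe_addRight]
    rw [_root_.map_mul, hcc, hmm0, hshift, _root_.map_mul]
    have hconjneg : (starRingEnd ℂ) ((-1 : ℂ) ^ i) = (-1 : ℂ) ^ i := by simp
    rw [hconjneg]
    have h5 : ((-1 : ℂ) ^ i) * ((-1 : ℂ) ^ i) = 1 := by rw [← mul_pow]; norm_num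
    linear_combination (-(c x * (starRingEnd ℂ) (ω ^ ((x : ℕ) * i)))) * h5
  intro j hj
  rcases Nat.lt_or_ge j (m + 1) with hc | hc
  · exact h0 j (by omega)
  · set i := d - j with hi
    have h1 := hrev i
    rw [h0 i (by omega), map_zero, mul_zero] at h1
    have hmodeq : ((d - 1) * i) % d = j % d := by
      have e1 : (d - 1) * i + i = d * i := by
        calc (d - 1) * i + i = ((d - 1) + 1) * i := by ring
          _ = d * i := by rw [show d - 1 + 1 = d by omega]
      have h3 : ((d - 1) * i + i) % d = (j + i) % d := by
        rw [e1, show j + i = d from by omega, Nat.mul_mod_right, Nat.mod_self]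
      have h4 : (d - 1) * i ≡ j [MOD d] :=
        Nat.ModEq.add_right_cancel' i h3
      exact h4
    calc ∑ b : Fin d, c b * ω ^ ((b : ℕ) * j)
        = ∑ b : Fin d, c b * ω ^ ((b : ℕ) * ((d - 1) * i)) := by
          refine Finset.sum_congr rfl fun b _ => ?_
          congr 1
          exact (hcong _ _ (Nat.ModEq.mul_left (b : ℕ) hmodeq)).symm
      _ = 0 := h1

lemma pair_zero (d m : ℕ) [NeZero d] (hd : d = m + m) (hm : 0 < m) (ω : ℂ)
    (hprim : IsPrimitiveRoot ω d)
    (p : Fin d → ℂ) (i₀ : ℕ)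
    (h : ∀ k, k < m → ∑ j : Fin d, p j * ω ^ ((j : ℕ) * (i₀ + 2 * k)) = 0)
    (a : Fin d) :
    p a * ω ^ ((a : ℕ) * i₀) + p (a + (m : Fin d)) * ω ^ ((((a + (m : Fin d)) : Fin d) : ℕ) * i₀) = 0 := by
  have hd0 : 0 < d := by omega
  have hζ : IsPrimitiveRoot (ω ^ 2) m := hprim.pow hd0 (by omega)
  set t := d - (a : ℕ) with ht
  have hvalm : ((m : Fin d) : ℕ) = m := by
    rw [Fin.val_natCast]; exact Nat.mod_eq_of_lt (by omega)
  have hA' : (((a + (m : Fin d)) : Fin d) : ℕ)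
      = if (a : ℕ) < m then (a : ℕ) + m else (a : ℕ) - m := by
    rw [Fin.val_add, hvalm]
    split_ifs with hc
    · exact Nat.mod_eq_of_lt (by omega)
    · rw [Nat.mod_eq_sub_mod (by omega), Nat.mod_eq_of_lt (by have := a.isLt; omega)]
      omega
  have hane : a ≠ a + (m : Fin d) := by
    intro hcon
    have := congrArg Fin.val hcon
    rw [hA'] at this
    have ha := a.isLt
    split_ifs at this <;> omega
  -- key double sum
  have key : ∑ k ∈ Finset.range m, (∑ j : Fin d, p j * ω ^ ((j : ℕ) * (i₀ + 2 * k))) * (ω ^ 2) ^ (t * k) = 0 := by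
    apply Finset.sum_eq_zero
    intro k hk
    rw [h k (Finset.mem_range.mp hk), zero_mul]
  have e1 : ∀ k ∈ Finset.range m, (∑ j : Fin d, p j * ω ^ ((j : ℕ) * (i₀ + 2 * k))) * (ω ^ 2) ^ (t * k)
      = ∑ j : Fin d, (p j * ω ^ ((j : ℕ) * i₀)) * (ω ^ 2) ^ (((j : ℕ) + t) * k) := by
    intro k _
    rw [Finset.sum_mul]
    refine Finset.sum_congr rfl fun j _ => ?_
    rw [← pow_mul, ← pow_mul]
    rw [mul_assoc, mul_assoc, ← pow_add, ← pow_add]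
    congr 1
    ring
  rw [Finset.sum_congr rfl e1, Finset.sum_comm] at key
  have e2 : ∀ j : Fin d, ∑ k ∈ Finset.range m, (p j * ω ^ ((j : ℕ) * i₀)) * (ω ^ 2) ^ (((j : ℕ) + t) * k)
      = (p j * ω ^ ((j : ℕ) * i₀)) * (if m ∣ ((j : ℕ) + t) then (m : ℂ) else 0) := by
    intro j
    rw [← Finset.mul_sum, orth_sum _ hζ]
  rw [Finset.sum_congr rfl (fun j _ => e2 j)] at key
  -- characterize divisibility
  have hdiv : ∀ j : Fin d, m ∣ ((j : ℕ) + t) ↔ (j = a ∨ j = a + (m : Fin d)) := by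
    intro j
    have hj := j.isLt
    have ha := a.isLt
    constructor
    · rintro ⟨k, hk⟩
      match k with
      | 0 => omega
      | 1 =>
        right; apply Fin.ext; rw [hA']
        split_ifs with hc <;> omega
      | 2 => left; exact Fin.ext (by omega)
      | 3 =>
        right; apply Fin.ext; rw [hA']
        split_ifs with hc <;> omega
      | (k+4) =>
        have h2 : m * 4 ≤ m * (k + 4) := Nat.mul_le_mul_left m (by omega)
        omega
    · rintro (rfl | rfl)
      · exact ⟨2, by omega⟩
      · rw [hA']
        split_ifs with hc
        · exact ⟨3, by omega⟩
        · exact ⟨1, by omega⟩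
  -- reduce the sum to two terms
  have e3 : ∑ j : Fin d, (p j * ω ^ ((j : ℕ) * i₀)) * (if m ∣ ((j : ℕ) + t) then (m : ℂ) else 0)
      = (p a * ω ^ ((a : ℕ) * i₀)) * m + (p (a + (m : Fin d)) * ω ^ ((((a + (m : Fin d)) : Fin d) : ℕ) * i₀)) * m := by
    rw [← Finset.sum_subset (Finset.subset_univ ({a, a + (m : Fin d)} : Finset (Fin d)))
      (fun j _ hj => ?_)]
    · rw [Finset.sum_pair hane]
      rw [if_pos ((hdiv a).mpr (Or.inl rfl)), if_pos ((hdiv (a + (m : Fin d))).mpr (Or.inr rfl))]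
    · rw [if_neg, mul_zero]
      intro hcon
      rcases (hdiv j).mp hcon with h' | h' <;>
        simp [h'] at hj
  rw [e3] at key
  have hmne : (m : ℂ) ≠ 0 := Nat.cast_ne_zero.mpr (by omega)
  have := mul_right_cancel₀ hmne (by linear_combination key :
    (p a * ω ^ ((a : ℕ) * i₀) + p (a + (m : Fin d)) * ω ^ ((((a + (m : Fin d)) : Fin d) : ℕ) * i₀)) * (m : ℂ) = 0 * m)
  exact this



/-- For even `d` and `0 < i₀ < d-1`, there is no unit vector `α` in `ℂ^d` with
`⟨α|X^{d/2}Z^i|α⟩ = 0` for `i = 0,…,d/2` and `⟨α|Z^{i₀+2k}|α⟩ = 0` for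
`k = 0,…,d/2-1`: these conditions are contradictory. -/
theorem no_unit_vector_lemma7 (d : ℕ) (he : 2 ∣ d) (i₀ : ℕ)
    (hi₀ : 0 < i₀) (hi₀' : i₀ < d - 1)
    (α : Fin d → ℂ) (hunit : star α ⬝ᵥ α = 1)
    (h1 : ∀ i : ℕ, i ≤ d / 2 →
      star α ⬝ᵥ (Xmat d ^ (d / 2) * Zmat d ^ i).mulVec α = 0)
    (h2 : ∀ k : ℕ, k < d / 2 →
      star α ⬝ᵥ (Zmat d ^ (i₀ + 2 * k)).mulVec α = 0) :
    False := by
  obtain ⟨m, hdm⟩ := he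
  have hm2 : 2 ≤ m := by omega
  have hd4 : 4 ≤ d := by omega
  have hdd : d / 2 = m := by omega
  haveI : NeZero d := ⟨by omega⟩
  simp only [hdd] at h1 h2
  have hprim : IsPrimitiveRoot (omega d) d := Complex.isPrimitiveRoot_exp d (by omega)
  have hω1 : omega d ^ d = 1 := hprim.pow_eq_one
  have hconj : (starRingEnd ℂ) (omega d) * omega d = 1 := by
    unfold omega
    rw [← Complex.exp_conj, ← Complex.exp_add]
    have h2' : (starRingEnd ℂ) (2 * Real.pi * Complex.I / d) + 2 * Real.pi * Complex.I / d = 0 := by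
      simp [map_div₀, _root_.map_mul, Complex.conj_I, Complex.conj_ofReal, map_ofNat]
      ring
    rw [h2', Complex.exp_zero]
  have hω0 : omega d ≠ 0 := by
    intro h; rw [h, mul_zero] at hconj; exact zero_ne_one hconj
  have hmodp : ∀ x : ℕ, omega d ^ x = omega d ^ (x % d) := by
    intro x
    conv_lhs => rw [← Nat.div_add_mod x d]
    rw [pow_add, pow_mul, hω1, one_pow, one_mul]
  have hcong : ∀ x y : ℕ, x % d = y % d → omega d ^ x = omega d ^ y := by
    intro x y h
    rw [hmodp x, hmodp y, h]
  have hneg : omega d ^ m = -1 := by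
    have hsq : (omega d ^ m - 1) * (omega d ^ m + 1) = 0 := by
      have h2'' : omega d ^ m * omega d ^ m = 1 := by
        rw [← pow_add, show m + m = d by omega, hω1]
      linear_combination h2''
    rcases mul_eq_zero.mp hsq with h | h
    · exfalso
      have hdvd : d ∣ m := hprim.dvd_of_pow_eq_one m (by linear_combination h)
      have := Nat.le_of_dvd (by omega) hdvd
      omega
    · linear_combination h
  have hvalm : ((m : Fin d) : ℕ) = m := by
    rw [Fin.val_natCast]; exact Nat.mod_eq_of_lt (by omega)
  have hmm0 : ∀ x : Fin d, x + (m : Fin d) + (m : Fin d) = x := by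
    intro x
    rw [add_assoc]
    have h3 : ((m : Fin d) + (m : Fin d)) = ((m + m : ℕ) : Fin d) := by push_cast; ring
    rw [h3, show m + m = d from by omega, Fin.natCast_self, add_zero]
  have hshift : ∀ (x : Fin d) (i : ℕ),
      omega d ^ ((((x + (m : Fin d)) : Fin d) : ℕ) * i) = omega d ^ ((x : ℕ) * i) * (-1 : ℂ) ^ i := by
    intro x i
    have hmv : (((x + (m : Fin d)) : Fin d) : ℕ) = ((x : ℕ) + m) % d := by
      rw [Fin.val_add, hvalm]
    have h4 : omega d ^ ((((x + (m : Fin d)) : Fin d) : ℕ) * i) = omega d ^ (((x : ℕ) + m) * i) := by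
      apply hcong
      rw [hmv]
      exact Nat.ModEq.mul_right i (Nat.mod_modEq _ d)
    rw [h4, add_mul, pow_add]
    congr 1
    rw [pow_mul, hneg]
  -- matrix action lemmas
  have hXeq : Xmat d = Matrix.of (fun i j : Fin d => if i = j + 1 then (1 : ℂ) else 0) := by
    ext i j
    simp only [Xmat, Matrix.of_apply]
    congr 1
    rw [eq_iff_iff, Fin.ext_iff, Fin.val_add, Fin.val_one']
    have e : ((j : ℕ) + 1 % d) % d = ((j : ℕ) + 1) % d := (Nat.mod_modEq 1 d).add_left (j : ℕ)
    rw [e]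
  have hX1 : ∀ (v : Fin d → ℂ) (a : Fin d), (Xmat d).mulVec v a = v (a - 1) := by
    intro v a
    rw [hXeq]
    simp only [Matrix.mulVec, dotProduct, Matrix.of_apply]
    have hterm : ∀ j : Fin d,
        (if a = j + 1 then (1 : ℂ) else 0) * v j = if a - 1 = j then v j else 0 := by
      intro j
      have hiff : (a - 1 = j) ↔ (a = j + 1) := sub_eq_iff_eq_add
      by_cases hcase : a = j + 1
      · rw [if_pos hcase, if_pos (hiff.mpr hcase), one_mul]
      · rw [if_neg hcase, if_neg (fun hh => hcase (hiff.mp hh)), zero_mul]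
    rw [Finset.sum_congr rfl (fun j _ => hterm j), Finset.sum_ite_eq]
    simp
  have hXn : ∀ (n : ℕ) (v : Fin d → ℂ) (a : Fin d),
      (Xmat d ^ n).mulVec v a = v (a - (n : Fin d)) := by
    intro n
    induction n with
    | zero => intro v a; rw [pow_zero, Matrix.one_mulVec]; norm_num
    | succ n ih =>
      intro v a
      rw [pow_succ', ← Matrix.mulVec_mulVec, hX1, ih]
      congr 1
      push_cast
      ring
  have hZt : ∀ (t : ℕ) (v : Fin d → ℂ) (j : Fin d),
      (Zmat d ^ t).mulVec v j = omega d ^ ((j : ℕ) * t) * v j := by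
    intro t v j
    rw [Zmat, Matrix.diagonal_pow, Matrix.mulVec_diagonal, Pi.pow_apply, ← pow_mul]
  -- unit vector in sum form
  have hunit' : ∑ j : Fin d, (starRingEnd ℂ) (α j) * α j = 1 := hunit
  set c : Fin d → ℂ := fun b => (starRingEnd ℂ) (α (b + (m : Fin d))) * α b with hcdef
  set p : Fin d → ℂ := fun j => (starRingEnd ℂ) (α j) * α j with hpdef
  have hA : ∀ i : ℕ, i ≤ m → ∑ b : Fin d, c b * omega d ^ ((b : ℕ) * i) = 0 := by
    intro i hi
    have h := h1 i hi
    rw [← Matrix.mulVec_mulVec] at h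
    rw [← h]
    show _ = ∑ a : Fin d, (star α) a * ((Xmat d ^ m).mulVec ((Zmat d ^ i).mulVec α)) a
    refine Fintype.sum_equiv (Equiv.addRight ((m : ℕ) : Fin d)) _ _ fun b => ?_
    simp only [Equiv.coe_addRight, hcdef]
    rw [hXn, hZt, add_sub_cancel_right]
    simp only [Pi.star_apply, ← starRingEnd_apply]
    ring
  have hB : ∀ k : ℕ, k < m → ∑ j : Fin d, p j * omega d ^ ((j : ℕ) * (i₀ + 2 * k)) = 0 := by
    intro k hk
    have h := h2 k hk
    rw [← h]
    show _ = ∑ j : Fin d, (star α) j * ((Zmat d ^ (i₀ + 2 * k)).mulVec α) j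
    refine Finset.sum_congr rfl fun j _ => ?_
    simp only [hpdef]
    rw [hZt]
    simp only [Pi.star_apply, ← starRingEnd_apply]
    ring
  have hcc : ∀ b : Fin d, (starRingEnd ℂ) (c b) = c (b + (m : Fin d)) := by
    intro b
    simp only [hcdef]
    rw [hmm0, _root_.map_mul, Complex.conj_conj]
    ring
  have hzero : ∀ j : ℕ, j < d → ∑ b : Fin d, c b * omega d ^ ((b : ℕ) * j) = 0 :=
    sym_extend d m (by omega) (by omega) (omega d) hprim hconj c hcc hA
  have hc0 : ∀ a : Fin d, c a = 0 := fun a =>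
    dft_extract d (by omega) (omega d) hprim c hzero a
  have hpair := pair_zero d m (by omega) (by omega) (omega d) hprim p i₀ hB
  have hrel : ∀ a : Fin d, p a + (-1 : ℂ) ^ i₀ * p (a + (m : Fin d)) = 0 := by
    intro a
    have h := hpair a
    rw [hshift a i₀] at h
    have hωpow : omega d ^ ((a : ℕ) * i₀) ≠ 0 := pow_ne_zero _ hω0
    refine mul_right_cancel₀ hωpow ?_
    rw [zero_mul]
    linear_combination h
  have hex : ∃ a : Fin d, α a ≠ 0 := by
    by_contra hno
    push_neg at hno
    rw [Finset.sum_eq_zero (fun j _ => by rw [hno j, mul_zero])] at hunit'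
    exact zero_ne_one hunit'
  obtain ⟨a, ha⟩ := hex
  rcases Nat.even_or_odd i₀ with hev | hod
  · have hpow : (-1 : ℂ) ^ i₀ = 1 := hev.neg_one_pow
    have h := hrel a
    rw [hpow, one_mul] at h
    have hsq : ∀ x : Fin d, p x = ((Complex.normSq (α x) : ℝ) : ℂ) := by
      intro x
      simp only [hpdef]
      exact (Complex.normSq_eq_conj_mul_self).symm
    rw [hsq a, hsq (a + (m : Fin d)), ← Complex.ofReal_add] at h
    have hre : Complex.normSq (α a) + Complex.normSq (α (a + (m : Fin d))) = 0 := by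
      exact_mod_cast h
    have h0 : Complex.normSq (α a) = 0 := by
      have := Complex.normSq_nonneg (α a)
      have := Complex.normSq_nonneg (α (a + (m : Fin d)))
      linarith
    exact ha (Complex.normSq_eq_zero.mp h0)
  · have hpow : (-1 : ℂ) ^ i₀ = -1 := hod.neg_one_pow
    have h := hrel a
    rw [hpow] at h
    have hpeq : p a = p (a + (m : Fin d)) := by linear_combination h
    have hcza := hc0 a
    simp only [hcdef] at hcza
    rcases mul_eq_zero.mp hcza with h' | h'
    · have hz : α (a + (m : Fin d)) = 0 := by
        have := congrArg (starRingEnd ℂ) h'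
        rwa [Complex.conj_conj, map_zero] at this
      have hpz : p a = 0 := by
        rw [hpeq]
        simp only [hpdef]
        rw [hz, mul_zero]
      simp only [hpdef] at hpz
      rcases mul_eq_zero.mp hpz with h'' | h''
      · exact ha (by
          have := congrArg (starRingEnd ℂ) h''
          rwa [Complex.conj_conj, map_zero] at this)
      · exact ha h''
    · exact ha h'
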